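/- Let k ≥ 2, let α : Fin k → ℝ be strictly decreasing with α_k ≥ 0, and let c₁ ≥ c₂ ≥ … ≥ c_{k−1} ≥ 0 be the sorted bids of the other agents. Suppose the truthful position q of an agent with value v ≥ 0 satisfies the strict inequalities c_{q−1} > v (when q > 1) and v > c_q (when q < k). Define Φ(p) = v * α_p − ∑_{j=p}^{k−1} c_j * (α_j − α_{j+1}). Then Φ(q) > Φ(p) for every position p ≠ q; i.e., truthful bidding is a strictly dominant strategy whenever ties are strict. -/

import Mathlib

/-- Strict dominance of truthful bidding in the SocialMAPF conflict-resolution auction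
(k = n+1 ≥ 2 agents): with strictly decreasing turn rewards `α` (last reward
nonnegative) and the other agents' sorted nonnegative bids `c`, if the truthful
position `q` of an agent with value `v` satisfies the strict tie-breaking conditions
(the bid just above `q` is `> v`, the bid at `q` is `< v`), then the truthful
position yields strictly larger utility than every other position. -/
theorem socialmapf_truthful_strictly_dominant (n : ℕ) (hn : 1 ≤ n)
    (α : Fin (n + 1) → ℝ) (hα : StrictAnti α) (hαlast : 0 ≤ α (Fin.last n))
    (c : Fin n → ℝ) (hc : Antitone c) (hc0 : ∀ j, 0 ≤ c j)
    (v : ℝ) (hv : 0 ≤ v)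
    (q : Fin (n + 1))
    (hq_above : ∀ j : Fin n, j.succ = q → v < c j)
    (hq_below : ∀ j : Fin n, j.castSucc = q → c j < v) :
    ∀ p : Fin (n + 1), p ≠ q →
      v * α p -
          ∑ j ∈ Finset.univ.filter (fun j : Fin n => p ≤ j.castSucc),
            c j * (α j.castSucc - α j.succ) <
        v * α q -
          ∑ j ∈ Finset.univ.filter (fun j : Fin n => q ≤ j.castSucc),
            c j * (α j.castSucc - α j.succ) := by
  set Φ : Fin (n + 1) → ℝ := fun p =>
    v * α p - ∑ j ∈ Finset.univ.filter (fun j : Fin n => p ≤ j.castSucc),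
      c j * (α j.castSucc - α j.succ) with hΦ
  have hgap : ∀ j : Fin n, 0 < α j.castSucc - α j.succ := fun j =>
    sub_pos.mpr (hα (Fin.castSucc_lt_succ : j.castSucc < j.succ))
  have hstep : ∀ j : Fin n, Φ j.castSucc = Φ j.succ + (v - c j) * (α j.castSucc - α j.succ) := by
    intro j
    have hset : Finset.univ.filter (fun i : Fin n => j.castSucc ≤ i.castSucc)
        = insert j (Finset.univ.filter (fun i : Fin n => j.succ ≤ i.castSucc)) := by
      ext i
      simp only [Finset.mem_filter, Finset.mem_univ, true_and, Finset.mem_insert,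
        Fin.castSucc_le_castSucc_iff, Fin.succ_le_castSucc_iff]
      constructor
      · intro h
        rcases eq_or_lt_of_le h with h | h
        · exact Or.inl h.symm
        · exact Or.inr h
      · rintro (rfl | h)
        · exact le_refl _
        · exact h.le
    have hnotmem : j ∉ Finset.univ.filter (fun i : Fin n => j.succ ≤ i.castSucc) := by
      simp [Fin.succ_le_castSucc_iff]
    simp only [hΦ, hset]
    rw [Finset.sum_insert hnotmem]
    ring
  have hdown : ∀ j : Fin n, q ≤ j.castSucc → c j < v := by
    intro j hj
    have hqn : q.val < n := lt_of_le_of_lt hj j.castSucc_lt_last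
    set jq : Fin n := ⟨q.val, hqn⟩ with hjq
    have h1 : c jq < v := hq_below jq (by simp [hjq, Fin.ext_iff])
    have h2 : c j ≤ c jq := hc (by simpa [hjq, Fin.le_def] using hj)
    exact lt_of_le_of_lt h2 h1
  have hup : ∀ j : Fin n, j.succ ≤ q → v < c j := by
    intro j hj
    have hj' : j.val + 1 ≤ q.val := hj
    have hqn : q.val - 1 < n := by omega
    set jq : Fin n := ⟨q.val - 1, hqn⟩ with hjq
    have h1 : v < c jq := hq_above jq (by simp [hjq, Fin.ext_iff]; omega)
    have h2 : c jq ≤ c j := hc (by simp [hjq, Fin.le_def]; omega)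
    exact lt_of_lt_of_le h1 h2
  -- p below q
  have claimA : ∀ m : ℕ, ∀ p : Fin (n + 1), p.val + m = q.val → 0 < m → Φ p < Φ q := by
    intro m
    induction m with
    | zero => intro p _ h; omega
    | succ m ih =>
      intro p hpm _
      have hpn : p.val < n := by omega
      set j : Fin n := ⟨p.val, hpn⟩ with hj
      have hpcast : p = j.castSucc := by simp [hj, Fin.ext_iff]
      have hjsq : j.succ ≤ q := by simp [hj, Fin.le_def]; omega
      have hlt : Φ p < Φ j.succ := by
        rw [hpcast, hstep j]
        have := mul_pos (sub_pos.mpr (hup j hjsq)) (hgap j)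
        nlinarith
      rcases Nat.eq_zero_or_pos m with hm | hm
      · have : j.succ = q := by subst hm; simp [hj, Fin.ext_iff]; omega
        rwa [this] at hlt
      · exact lt_trans hlt (ih j.succ (by simp [hj]; omega) hm)
  -- p above q
  have claimB : ∀ m : ℕ, ∀ p : Fin (n + 1), q.val + m = p.val → 0 < m → Φ p < Φ q := by
    intro m
    induction m with
    | zero => intro p _ h; omega
    | succ m ih =>
      intro p hpm _
      have hpn : p.val - 1 < n := by have := p.isLt; omega
      set j : Fin n := ⟨p.val - 1, hpn⟩ with hj
      have hpsucc : p = j.succ := by simp [hj, Fin.ext_iff]; omega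
      have hjcq : q ≤ j.castSucc := by simp [hj, Fin.le_def]; omega
      have hlt : Φ p < Φ j.castSucc := by
        rw [hpsucc, hstep j]
        have h1 : v - c j > 0 := sub_pos.mpr (hdown j hjcq)
        nlinarith [hgap j]
      rcases Nat.eq_zero_or_pos m with hm | hm
      · have : j.castSucc = q := by subst hm; simp [hj, Fin.ext_iff]; omega
        rwa [this] at hlt
      · exact lt_trans hlt (ih j.castSucc (by simp [hj]; omega) hm)
  intro p hpq
  rcases lt_trichotomy p.val q.val with h | h | h
  · exact claimA (q.val - p.val) p (by omega) (by omega)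
  · exact absurd (Fin.ext h) hpq
  · exact claimB (p.val - q.val) p (by omega) (by omega)
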